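/- Let p be an odd prime and n ≥ 0 with p-adic digits a_i (so n = Σ a_i p^i). If a_0 ≠ p−1, then C_n ≢ 0 (mod p) if and only if every digit a_i satisfies a_i ≤ (p−1)/2. -/

import Mathlib

private lemma mod_pow_succ_eq (n p i : ℕ) :
    n % p ^ (i + 1) = p ^ i * ((n / p ^ i) % p) + n % p ^ i := by
  rw [pow_succ, Nat.mod_mul, Nat.add_comm, Nat.mul_comm]

private lemma no_carry_of_small_digits (p n : ℕ)
    (h : ∀ i, 2 * ((n / p ^ i) % p) < p) : ∀ i, 2 * (n % p ^ i) < p ^ i := by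
  intro i
  induction i with
  | zero => simp [Nat.mod_one]
  | succ i ih =>
    rw [mod_pow_succ_eq, pow_succ]
    have h1 := h i
    calc 2 * (p ^ i * (n / p ^ i % p) + n % p ^ i)
        = p ^ i * (2 * (n / p ^ i % p)) + 2 * (n % p ^ i) := by ring
      _ < p ^ i * (2 * (n / p ^ i % p)) + p ^ i := by omega
      _ = p ^ i * (2 * (n / p ^ i % p) + 1) := by ring
      _ ≤ p ^ i * p := Nat.mul_le_mul_left _ (by omega)

theorem catalan_not_dvd_iff_digits (p : ℕ) (hp : p.Prime) (hodd : Odd p) (n : ℕ)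
    (h0 : n % p ≠ p - 1) :
    ¬ (p ∣ catalan n) ↔ ∀ i : ℕ, (n / p ^ i) % p ≤ (p - 1) / 2 := by
  haveI : Fact p.Prime := ⟨hp⟩
  have hp2 : 2 ≤ p := hp.two_le
  obtain ⟨m, hm⟩ := hodd
  -- digit bound equivalence
  have hdig : ∀ d : ℕ, d < p → (d ≤ (p - 1) / 2 ↔ 2 * d < p) := by
    intro d hd; subst hm; omega
  -- p does not divide n + 1
  have hmod : n % p < p := Nat.mod_lt n (by omega)
  have hsucc : (n + 1) % p = n % p + 1 := by
    conv_lhs => rw [← Nat.div_add_mod n p, Nat.add_assoc, Nat.mul_add_mod]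
    exact Nat.mod_eq_of_lt (by omega)
  have hnp1 : ¬ p ∣ (n + 1) := by
    rw [Nat.dvd_iff_mod_eq_zero]; omega
  -- reduce catalan to central binomial
  have hcat : p ∣ catalan n ↔ p ∣ Nat.choose (n + n) n := by
    constructor
    · intro h
      have := succ_mul_catalan_eq_centralBinom n
      rw [Nat.centralBinom, two_mul] at this
      exact this ▸ Dvd.dvd.mul_left h (n + 1)
    · intro h
      have := succ_mul_catalan_eq_centralBinom n
      rw [Nat.centralBinom, two_mul] at this
      rw [← this] at h
      rcases (hp.dvd_mul.mp h) with h' | h'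
      · exact absurd h' hnp1
      · exact h'
  set b := Nat.log p (n + n) + 2 with hb
  have hlog : Nat.log p (n + n) < b := by omega
  have hval := padicValNat_choose' (p := p) (n := n) (k := n) (b := b) hlog
  have hpos : 0 < Nat.choose (n + n) n := Nat.choose_pos (Nat.le_add_left n n)
  have hdvd : p ∣ Nat.choose (n + n) n ↔
      padicValNat p (Nat.choose (n + n) n) ≠ 0 :=
    dvd_iff_padicValNat_ne_zero (by omega)
  rw [hcat, hdvd, hval, not_ne_iff, Finset.card_eq_zero, Finset.filter_eq_empty_iff]
  constructor
  · intro h i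
    by_cases hni : n < p ^ i
    · rw [Nat.div_eq_of_lt hni, Nat.zero_mod]
      exact Nat.zero_le _
    · push_neg at hni
      have hn0 : n ≠ 0 := by
        have := Nat.one_le_two_pow (n := i)
        have h1 : 1 ≤ p ^ i := Nat.one_le_pow _ _ (by omega)
        omega
      have hi1 : i + 1 ∈ Finset.Ico 1 b := by
        have h1 : i ≤ Nat.log p n := (Nat.le_log_iff_pow_le (by omega) hn0).mpr hni
        have h2 : Nat.log p n ≤ Nat.log p (n + n) := Nat.log_mono_right (by omega)
        simp only [Finset.mem_Ico, hb]; omega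
      have hc := h hi1
      push_neg at hc
      have hid := mod_pow_succ_eq n p i
      rw [pow_succ] at hc
      rw [hdig _ (Nat.mod_lt _ (by omega))]
      have hppos : 0 < p ^ i := Nat.one_le_pow _ _ (by omega)
      by_contra hcon
      push_neg at hcon
      rw [pow_succ] at hid
      have h2 : p ^ i * p ≤ 2 * (p ^ i * (n / p ^ i % p)) := by
        calc p ^ i * p ≤ p ^ i * (2 * (n / p ^ i % p)) := Nat.mul_le_mul_left _ hcon
          _ = 2 * (p ^ i * (n / p ^ i % p)) := by ring
      have h4 : p ^ i * (n / p ^ i % p) ≤ n % (p ^ i * p) := hid ▸ Nat.le_add_right _ _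
      have h5 : p ^ i * p ≤ 2 * (n % (p ^ i * p)) := h2.trans (Nat.mul_le_mul_left 2 h4)
      omega
  · intro h i hi hle
    have hall : ∀ j, 2 * ((n / p ^ j) % p) < p := fun j =>
      (hdig _ (Nat.mod_lt _ (by omega))).mp (h j)
    have := no_carry_of_small_digits p n hall i
    omega
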